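/- Let G be a finite group such that |γ₂(G)| = p for a prime p and γ₂(G) ≤ Z(G). Then G is isoclinic to an extraspecial p-group. -/

import Mathlib

lemma mem_commutator_of {G : Type*} [Group G] (x y : G) :
    x⁻¹ * y⁻¹ * x * y ∈ commutator G := by
  have h := Subgroup.commutator_mem_commutator (Subgroup.mem_top x⁻¹) (Subgroup.mem_top y⁻¹)
  show x⁻¹ * y⁻¹ * x * y ∈ ⁅(⊤ : Subgroup G), (⊤ : Subgroup G)⁆
  simpa [commutatorElement_def, mul_assoc] using h

/-- An isoclinism between two groups. -/
structure Isoclinism (G H : Type*) [Group G] [Group H] where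
  α : (G ⧸ Subgroup.center G) ≃* (H ⧸ Subgroup.center H)
  β : (commutator G) ≃* (commutator H)
  compat : ∀ (x y : G) (x' y' : H),
    α (x : G ⧸ Subgroup.center G) = (x' : H ⧸ Subgroup.center H) →
    α (y : G ⧸ Subgroup.center G) = (y' : H ⧸ Subgroup.center H) →
    (β ⟨x⁻¹ * y⁻¹ * x * y, mem_commutator_of x y⟩ : H) = x'⁻¹ * y'⁻¹ * x' * y'

section HeisSec

variable {p : ℕ} [Fact p.Prime] {V : Type} [AddCommGroup V] [Module (ZMod p) V]

@[ext] structure Heis (B : V →ₗ[ZMod p] V →ₗ[ZMod p] ZMod p) : Type where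
  v : V
  t : ZMod p

namespace Heis

variable {B : V →ₗ[ZMod p] V →ₗ[ZMod p] ZMod p}

instance : Mul (Heis B) := ⟨fun x y => ⟨x.v + y.v, x.t + y.t + B x.v y.v⟩⟩
instance : One (Heis B) := ⟨⟨0, 0⟩⟩
instance : Inv (Heis B) := ⟨fun x => ⟨-x.v, B x.v x.v - x.t⟩⟩

@[simp] lemma mul_v (x y : Heis B) : (x * y).v = x.v + y.v := rfl
@[simp] lemma mul_t (x y : Heis B) : (x * y).t = x.t + y.t + B x.v y.v := rfl
@[simp] lemma one_v : (1 : Heis B).v = 0 := rfl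
@[simp] lemma one_t : (1 : Heis B).t = 0 := rfl
@[simp] lemma inv_v (x : Heis B) : (x⁻¹).v = -x.v := rfl
@[simp] lemma inv_t (x : Heis B) : (x⁻¹).t = B x.v x.v - x.t := rfl

instance : Group (Heis B) where
  mul_assoc a b c := by
    ext
    · simp [add_assoc]
    · simp only [mul_t, mul_v, map_add, LinearMap.add_apply]; ring
  one_mul a := by ext <;> simp
  mul_one a := by ext <;> simp
  inv_mul_cancel a := by ext <;> simp

def equivProd : Heis B ≃ V × ZMod p where
  toFun x := (x.v, x.t)
  invFun z := ⟨z.1, z.2⟩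
  left_inv x := rfl
  right_inv z := rfl

lemma comm_v (x y : Heis B) : (x⁻¹ * y⁻¹ * x * y).v = 0 := by
  simp only [mul_v, inv_v]; abel

lemma comm_t (x y : Heis B) :
    (x⁻¹ * y⁻¹ * x * y).t = B x.v y.v - B y.v x.v := by
  simp only [mul_t, inv_t, inv_v, mul_v, map_add, map_neg, LinearMap.add_apply,
    LinearMap.neg_apply]
  ring

lemma mem_center_iff (hnd : ∀ a : V, (∀ w : V, B a w - B w a = 0) → a = 0) (x : Heis B) :
    x ∈ Subgroup.center (Heis B) ↔ x.v = 0 := by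
  rw [Subgroup.mem_center_iff]
  constructor
  · intro h
    apply hnd
    intro w
    have := congrArg Heis.t (h ⟨w, 0⟩)
    simp only [mul_t] at this
    have : B w x.v = B x.v w := by linear_combination this
    linear_combination this.symm
  · intro h g
    ext
    · simp [h, add_comm]
    · simp [h, add_comm]

lemma mk_zero_mem_commutator (hex : ∃ a b : V, B a b ≠ B b a) (s : ZMod p) :
    (⟨0, s⟩ : Heis B) ∈ commutator (Heis B) := by
  obtain ⟨a, b, hab⟩ := hex
  set u : ZMod p := B a b - B b a with hu
  have hu0 : u ≠ 0 := sub_ne_zero.mpr hab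
  set x : Heis B := ⟨(s * u⁻¹) • a, 0⟩ with hx
  set y : Heis B := ⟨b, 0⟩ with hy
  have : (⟨0, s⟩ : Heis B) = x⁻¹ * y⁻¹ * x * y := by
    ext
    · rw [comm_v]
    · rw [comm_t]
      simp only [hx, hy, map_smul, LinearMap.smul_apply, smul_eq_mul]
      field_simp
      ring
  rw [this]
  exact mem_commutator_of x y

lemma center_eq_commutator (hnd : ∀ a : V, (∀ w : V, B a w - B w a = 0) → a = 0)
    (hex : ∃ a b : V, B a b ≠ B b a) :
    Subgroup.center (Heis B) = commutator (Heis B) := by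
  apply le_antisymm
  · intro x hx
    rw [mem_center_iff hnd] at hx
    have : x = (⟨0, x.t⟩ : Heis B) := by ext <;> simp [hx]
    rw [this]
    exact mk_zero_mem_commutator hex x.t
  · rw [commutator_def, Subgroup.commutator_le]
    intro g _ h _
    rw [mem_center_iff hnd]
    show (g * h * g⁻¹ * h⁻¹).v = 0
    simp only [mul_v, inv_v]; abel

end Heis

end HeisSec

section Bconstr

variable {p n : ℕ} [Fact p.Prime]

noncomputable def Bmap (ω : (Fin n → ZMod p) →ₗ[ZMod p] (Fin n → ZMod p) →ₗ[ZMod p] ZMod p) :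
    (Fin n → ZMod p) →ₗ[ZMod p] (Fin n → ZMod p) →ₗ[ZMod p] ZMod p :=
  LinearMap.mk₂ (ZMod p)
    (fun a b => ∑ i, ∑ j, if i < j then a i * b j * ω (Pi.single i 1) (Pi.single j 1) else 0)
    (by
      intro a a' b
      rw [← Finset.sum_add_distrib]
      refine Finset.sum_congr rfl fun i _ => ?_
      rw [← Finset.sum_add_distrib]
      refine Finset.sum_congr rfl fun j _ => ?_
      simp only [Pi.add_apply]
      split <;> ring)
    (by
      intro c a b
      rw [smul_eq_mul, Finset.mul_sum]
      refine Finset.sum_congr rfl fun i _ => ?_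
      rw [Finset.mul_sum]
      refine Finset.sum_congr rfl fun j _ => ?_
      simp only [Pi.smul_apply, smul_eq_mul]
      split <;> ring)
    (by
      intro a b b'
      rw [← Finset.sum_add_distrib]
      refine Finset.sum_congr rfl fun i _ => ?_
      rw [← Finset.sum_add_distrib]
      refine Finset.sum_congr rfl fun j _ => ?_
      simp only [Pi.add_apply]
      split <;> ring)
    (by
      intro c a b
      rw [smul_eq_mul, Finset.mul_sum]
      refine Finset.sum_congr rfl fun i _ => ?_
      rw [Finset.mul_sum]
      refine Finset.sum_congr rfl fun j _ => ?_
      simp only [Pi.smul_apply, smul_eq_mul]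
      split <;> ring)

lemma Bmap_apply (ω : (Fin n → ZMod p) →ₗ[ZMod p] (Fin n → ZMod p) →ₗ[ZMod p] ZMod p)
    (a b : Fin n → ZMod p) :
    Bmap ω a b = ∑ i, ∑ j, if i < j then a i * b j * ω (Pi.single i 1) (Pi.single j 1) else 0 :=
  rfl

lemma omega_expand (ω : (Fin n → ZMod p) →ₗ[ZMod p] (Fin n → ZMod p) →ₗ[ZMod p] ZMod p)
    (a b : Fin n → ZMod p) :
    ω a b = ∑ i, ∑ j, a i * b j * ω (Pi.single i 1) (Pi.single j 1) := by
  have ha : a = ∑ i, a i • (Pi.single i 1 : Fin n → ZMod p) := by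
    ext j
    simp [Finset.sum_apply, Pi.single_apply]
  have hb : b = ∑ j, b j • (Pi.single j 1 : Fin n → ZMod p) := by
    ext j
    simp [Finset.sum_apply, Pi.single_apply]
  conv_lhs => rw [ha, hb]
  simp_rw [map_sum, map_smul, LinearMap.sum_apply, LinearMap.smul_apply, smul_eq_mul]
  rw [Finset.sum_comm]
  refine Finset.sum_congr rfl fun i _ => ?_
  rw [Finset.mul_sum]
  exact Finset.sum_congr rfl fun j _ => by ring

lemma Bmap_sub (ω : (Fin n → ZMod p) →ₗ[ZMod p] (Fin n → ZMod p) →ₗ[ZMod p] ZMod p)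
    (halt : ∀ a, ω a a = 0) (a b : Fin n → ZMod p) :
    Bmap ω a b - Bmap ω b a = ω a b := by
  have hskew : ∀ x y, ω y x = -ω x y := by
    intro x y
    have h := halt (x + y)
    simp only [map_add, LinearMap.add_apply, halt] at h
    linear_combination h
  have hdiag : ∀ i, ω (Pi.single i 1) (Pi.single i 1) = 0 := fun i => halt _
  rw [omega_expand ω a b, Bmap_apply, Bmap_apply]
  rw [Finset.sum_comm (f := fun i j =>
    if i < j then b i * a j * ω (Pi.single i 1) (Pi.single j 1) else 0)]
  rw [← Finset.sum_sub_distrib]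
  refine Finset.sum_congr rfl fun i _ => ?_
  rw [← Finset.sum_sub_distrib]
  refine Finset.sum_congr rfl fun j _ => ?_
  rcases lt_trichotomy i j with h | h | h
  · rw [if_pos h, if_neg (by omega : ¬ j < i)]
    ring
  · subst h
    rw [if_neg (lt_irrefl i), if_neg (lt_irrefl i), hdiag i]
    ring
  · rw [if_neg (by omega : ¬ i < j), if_pos h, hskew (Pi.single i 1) (Pi.single j 1)]
    ring

end Bconstr

theorem exists_H {G : Type*} [Group G] (p n : ℕ) [Fact p.Prime]
    (ω : (Fin n → ZMod p) →ₗ[ZMod p] (Fin n → ZMod p) →ₗ[ZMod p] ZMod p)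
    (halt : ∀ a, ω a a = 0)
    (e : (G ⧸ Subgroup.center G) ≃* Multiplicative (Fin n → ZMod p))
    (ψ : (commutator G) ≃* Multiplicative (ZMod p))
    (hcompat : ∀ x y : G,
      (ψ ⟨x⁻¹ * y⁻¹ * x * y, mem_commutator_of x y⟩).toAdd
        = ω (e (x : G ⧸ Subgroup.center G)).toAdd (e (y : G ⧸ Subgroup.center G)).toAdd) :
    ∃ (H : Type) (_ : Group H) (_ : Finite H),
      IsPGroup p H ∧ Subgroup.center H = commutator H ∧
        Nat.card (Subgroup.center H) = p ∧ Nonempty (Isoclinism G H) := by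
  classical
  have hψone : ∀ (x y : G), (ψ ⟨x⁻¹ * y⁻¹ * x * y, mem_commutator_of x y⟩).toAdd = 0
      ↔ x⁻¹ * y⁻¹ * x * y = 1 := by
    intro x y
    rw [toAdd_eq_zero, MulEquiv.map_eq_one_iff]
    exact Subtype.ext_iff.trans (by simp)
  -- nondegeneracy of ω
  have hnd : ∀ a, (∀ w, ω a w = 0) → a = 0 := by
    intro a ha
    obtain ⟨x, hx⟩ := QuotientGroup.mk_surjective (e.symm (Multiplicative.ofAdd a))
    have hex : (e (x : G ⧸ Subgroup.center G)).toAdd = a := by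
      rw [hx, MulEquiv.apply_symm_apply]; rfl
    have hxc : (x : G ⧸ Subgroup.center G) = 1 := by
      rw [QuotientGroup.eq_one_iff]
      rw [Subgroup.mem_center_iff]
      intro y
      have h1 := hcompat x y
      rw [hex, ha] at h1
      have h2 := (hψone x y).mp h1
      have h3 := congrArg (fun g => y * x * g) h2
      exact (by simpa [mul_assoc] using h3 : x * y = y * x).symm
    have h4 : e.symm (Multiplicative.ofAdd a) = 1 := hx ▸ hxc
    have h5 : Multiplicative.ofAdd a = 1 := e.symm.injective (by rw [h4, map_one])
    simpa using h5
  -- a noncommuting pair exists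
  have hnontriv : ∃ x y : G, x⁻¹ * y⁻¹ * x * y ≠ 1 := by
    by_contra hcon
    push_neg at hcon
    have hbot : commutator G = ⊥ := by
      apply le_antisymm _ bot_le
      rw [commutator_def, Subgroup.commutator_le]
      intro g _ h _
      rw [Subgroup.mem_bot]
      simpa [commutatorElement_def] using hcon g⁻¹ h⁻¹
    have h1 : Nat.card (commutator G) = 1 := by rw [hbot]; simp
    have h2 : Nat.card (commutator G) = p := by
      rw [Nat.card_congr ψ.toEquiv, Nat.card_congr Multiplicative.toAdd, Nat.card_zmod]
    exact (Fact.out : p.Prime).one_lt.ne' (h2.symm.trans h1)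
  have homega_ne : ∃ a b, ω a b ≠ 0 := by
    obtain ⟨x, y, hxy⟩ := hnontriv
    refine ⟨(e (x : G ⧸ Subgroup.center G)).toAdd, (e (y : G ⧸ Subgroup.center G)).toAdd, ?_⟩
    rw [← hcompat x y]
    intro h
    exact hxy ((hψone x y).mp h)
  set B := Bmap ω with hB
  have hndB : ∀ a, (∀ w, B a w - B w a = 0) → a = 0 := by
    intro a h
    refine hnd a fun w => ?_
    rw [← Bmap_sub ω halt a w]
    exact h w
  have hexB : ∃ a b, B a b ≠ B b a := by
    obtain ⟨a, b, hab⟩ := homega_ne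
    refine ⟨a, b, fun h => hab ?_⟩
    rw [← Bmap_sub ω halt a b, h, sub_self]
  have hfin : Finite (Heis B) := Finite.of_equiv _ Heis.equivProd.symm
  have hcardH : Nat.card (Heis B) = p ^ (n + 1) := by
    rw [Nat.card_congr (Heis.equivProd), Nat.card_prod, Nat.card_pi]
    simp [Nat.card_zmod, pow_succ]
  -- the central isomorphism μ
  have hvz : ∀ x : Heis B, x ∈ commutator (Heis B) → x.v = 0 := by
    intro x hx
    rw [← Heis.center_eq_commutator hndB hexB] at hx
    exact (Heis.mem_center_iff hndB x).mp hx
  let μ : Multiplicative (ZMod p) ≃* ↥(commutator (Heis B)) :=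
  { toFun := fun s => ⟨⟨0, s.toAdd⟩, Heis.mk_zero_mem_commutator hexB _⟩
    invFun := fun x => Multiplicative.ofAdd x.1.t
    left_inv := fun s => rfl
    right_inv := fun x => by
      apply Subtype.ext
      apply Heis.ext
      · exact (hvz x.1 x.2).symm
      · rfl
    map_mul' := fun s t => by
      apply Subtype.ext
      apply Heis.ext <;> simp }
  -- quotient description
  let π : Heis B →* Multiplicative (Fin n → ZMod p) :=
  { toFun := fun x => Multiplicative.ofAdd x.v
    map_one' := rfl
    map_mul' := fun x y => rfl }
  have hπs : Function.Surjective π := fun w => ⟨⟨w.toAdd, 0⟩, rfl⟩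
  have hker : Subgroup.center (Heis B) = π.ker := by
    ext x
    rw [Heis.mem_center_iff hndB, MonoidHom.mem_ker]
    constructor
    · intro h; simpa [π] using h
    · intro h; simpa [π] using h
  let ι : (Heis B ⧸ Subgroup.center (Heis B)) ≃* Multiplicative (Fin n → ZMod p) :=
    (QuotientGroup.quotientMulEquivOfEq hker).trans
      (QuotientGroup.quotientKerEquivOfSurjective π hπs)
  have hι : ∀ x : Heis B, ι ((x : Heis B ⧸ Subgroup.center (Heis B))) =
      Multiplicative.ofAdd x.v := fun x => rfl
  refine ⟨Heis B, inferInstance, hfin, IsPGroup.of_card hcardH,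
    Heis.center_eq_commutator hndB hexB, ?_, ⟨{
      α := e.trans ι.symm
      β := ψ.trans μ
      compat := ?_ }⟩⟩
  · rw [Heis.center_eq_commutator hndB hexB, ← Nat.card_congr μ.toEquiv,
      Nat.card_congr Multiplicative.toAdd, Nat.card_zmod]
  · intro x y x' y' h1 h2
    have k1 : (e (x : G ⧸ Subgroup.center G)).toAdd = x'.v := by
      have h1' : ι.symm (e (x : G ⧸ Subgroup.center G)) = ↑x' := h1
      have : e (x : G ⧸ Subgroup.center G) = ι ↑x' := by
        rw [← h1', MulEquiv.apply_symm_apply]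
      rw [this, hι]; rfl
    have k2 : (e (y : G ⧸ Subgroup.center G)).toAdd = y'.v := by
      have h2' : ι.symm (e (y : G ⧸ Subgroup.center G)) = ↑y' := h2
      have : e (y : G ⧸ Subgroup.center G) = ι ↑y' := by
        rw [← h2', MulEquiv.apply_symm_apply]
      rw [this, hι]; rfl
    show (⟨0, (ψ ⟨x⁻¹ * y⁻¹ * x * y, mem_commutator_of x y⟩).toAdd⟩ : Heis B)
      = x'⁻¹ * y'⁻¹ * x' * y'
    apply Heis.ext
    · exact (Heis.comm_v x' y').symm
    · rw [Heis.comm_t, Bmap_sub ω halt, hcompat x y, k1, k2]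

def qCommGroup {G : Type*} [Group G] (hle : commutator G ≤ Subgroup.center G) :
    CommGroup (G ⧸ Subgroup.center G) :=
  { (inferInstance : Group (G ⧸ Subgroup.center G)) with
    mul_comm := by
      intro a b
      obtain ⟨x, rfl⟩ := QuotientGroup.mk_surjective a
      obtain ⟨y, rfl⟩ := QuotientGroup.mk_surjective b
      rw [← QuotientGroup.mk_mul, ← QuotientGroup.mk_mul, QuotientGroup.eq]
      have h := hle (mem_commutator_of y x)
      simpa [mul_inv_rev, mul_assoc] using h }

lemma comm_mul_left {G : Type*} [Group G] (hle : commutator G ≤ Subgroup.center G)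
    (x x' y : G) :
    (x * x')⁻¹ * y⁻¹ * (x * x') * y = (x⁻¹ * y⁻¹ * x * y) * (x'⁻¹ * y⁻¹ * x' * y) := by
  have hcomm := Subgroup.mem_center_iff.mp (hle (mem_commutator_of x y))
  calc (x * x')⁻¹ * y⁻¹ * (x * x') * y
      = (x'⁻¹ * (x⁻¹ * y⁻¹ * x * y)) * (y⁻¹ * x' * y) := by group
    _ = ((x⁻¹ * y⁻¹ * x * y) * x'⁻¹) * (y⁻¹ * x' * y) := by rw [hcomm x'⁻¹]
    _ = (x⁻¹ * y⁻¹ * x * y) * (x'⁻¹ * y⁻¹ * x' * y) := by group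

lemma comm_mul_right {G : Type*} [Group G] (hle : commutator G ≤ Subgroup.center G)
    (x y y' : G) :
    x⁻¹ * (y * y')⁻¹ * x * (y * y') = (x⁻¹ * y'⁻¹ * x * y') * (x⁻¹ * y⁻¹ * x * y) := by
  have hcomm := Subgroup.mem_center_iff.mp (hle (mem_commutator_of x y))
  calc x⁻¹ * (y * y')⁻¹ * x * (y * y')
      = (x⁻¹ * y'⁻¹ * x) * ((x⁻¹ * y⁻¹ * x * y) * y') := by group
    _ = (x⁻¹ * y'⁻¹ * x) * (y' * (x⁻¹ * y⁻¹ * x * y)) := by rw [← hcomm y']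
    _ = (x⁻¹ * y'⁻¹ * x * y') * (x⁻¹ * y⁻¹ * x * y) := by group

lemma exists_data {G : Type*} [Group G] [Finite G] (p : ℕ) [Fact p.Prime]
    (hcard : Nat.card (commutator G) = p)
    (hle : commutator G ≤ Subgroup.center G) :
    ∃ (n : ℕ) (ω : (Fin n → ZMod p) →ₗ[ZMod p] (Fin n → ZMod p) →ₗ[ZMod p] ZMod p)
      (e : (G ⧸ Subgroup.center G) ≃* Multiplicative (Fin n → ZMod p))
      (ψ : (commutator G) ≃* Multiplicative (ZMod p)),
      (∀ a, ω a a = 0) ∧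
      (∀ x y : G,
        (ψ ⟨x⁻¹ * y⁻¹ * x * y, mem_commutator_of x y⟩).toAdd
          = ω (e (x : G ⧸ Subgroup.center G)).toAdd (e (y : G ⧸ Subgroup.center G)).toAdd) := by
  classical
  have hcyc : IsCyclic (commutator G) := isCyclic_of_prime_card hcard
  have ψ : (commutator G) ≃* Multiplicative (ZMod p) := by
    subst hcard
    exact (zmodCyclicMulEquiv hcyc).symm
  set f : G → G → ZMod p :=
    fun x y => (ψ ⟨x⁻¹ * y⁻¹ * x * y, mem_commutator_of x y⟩).toAdd with hf_def
  have hf_iff : ∀ x y : G, f x y = 0 ↔ x⁻¹ * y⁻¹ * x * y = 1 := by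
    intro x y
    rw [hf_def]
    rw [toAdd_eq_zero, MulEquiv.map_eq_one_iff]
    exact Subtype.ext_iff.trans (by simp)
  have hf_left : ∀ x x' y : G, f (x * x') y = f x y + f x' y := by
    intro x x' y
    have : (⟨(x * x')⁻¹ * y⁻¹ * (x * x') * y, mem_commutator_of _ y⟩ : commutator G)
        = ⟨x⁻¹ * y⁻¹ * x * y, mem_commutator_of x y⟩
          * ⟨x'⁻¹ * y⁻¹ * x' * y, mem_commutator_of x' y⟩ :=
      Subtype.ext (comm_mul_left hle x x' y)
    rw [hf_def]
    simp only [this, map_mul, toAdd_mul]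
  have hf_right : ∀ x y y' : G, f x (y * y') = f x y + f x y' := by
    intro x y y'
    have : (⟨x⁻¹ * (y * y')⁻¹ * x * (y * y'), mem_commutator_of x _⟩ : commutator G)
        = ⟨x⁻¹ * y'⁻¹ * x * y', mem_commutator_of x y'⟩
          * ⟨x⁻¹ * y⁻¹ * x * y, mem_commutator_of x y⟩ :=
      Subtype.ext (comm_mul_right hle x y y')
    rw [hf_def]
    simp only [this, map_mul, toAdd_mul]
    ring
  have hf_diag : ∀ x : G, f x x = 0 := by
    intro x
    rw [hf_iff]
    group
  have hf_center_l : ∀ (z : G), z ∈ Subgroup.center G → ∀ y, f z y = 0 := by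
    intro z hz y
    rw [hf_iff]
    have h := Subgroup.mem_center_iff.mp hz y
    rw [mul_assoc, ← h]
    group
  have hf_center_r : ∀ (z : G), z ∈ Subgroup.center G → ∀ x, f x z = 0 := by
    intro z hz x
    rw [hf_iff]
    have h := Subgroup.mem_center_iff.mp hz x
    rw [mul_assoc, h]
    group
  have hf_inv_left : ∀ x x' y : G, (x : G ⧸ Subgroup.center G) = (x' : G ⧸ Subgroup.center G) →
      f x y = f x' y := by
    intro x x' y h
    have h' : x⁻¹ * x' ∈ Subgroup.center G := QuotientGroup.eq.mp h
    have hx' : x * (x⁻¹ * x') = x' := by group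
    rw [← hx', hf_left, hf_center_l _ h' y, add_zero]
  have hf_inv_right : ∀ x y y' : G, (y : G ⧸ Subgroup.center G) = (y' : G ⧸ Subgroup.center G) →
      f x y = f x y' := by
    intro x y y' h
    have h' : y⁻¹ * y' ∈ Subgroup.center G := QuotientGroup.eq.mp h
    have hy' : y * (y⁻¹ * y') = y' := by group
    rw [← hy', hf_right, hf_center_r _ h' x, add_zero]
  -- commuting detection
  have hk_comm : ∀ x y : G, x⁻¹ * y⁻¹ * x * y = 1 → y * x = x * y := by
    intro x y h2
    have h3 := congrArg (fun g => y * x * g) h2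
    exact (by simpa [mul_assoc] using h3 : x * y = y * x).symm
  -- p-th powers are central
  have hf_pow : ∀ (x y : G) (m : ℕ), f (x ^ m) y = m • f x y := by
    intro x y m
    induction m with
    | zero =>
      simp only [pow_zero, zero_smul]
      rw [hf_iff]
      group
    | succ m ih =>
      rw [pow_succ, hf_left, ih, succ_nsmul]
  have hcentral_pow : ∀ x : G, x ^ p ∈ Subgroup.center G := by
    intro x
    rw [Subgroup.mem_center_iff]
    intro y
    apply hk_comm
    rw [← hf_iff, hf_pow, nsmul_eq_mul, ZMod.natCast_self, zero_mul]
  -- the quotient as a ZMod p vector space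
  letI : CommGroup (G ⧸ Subgroup.center G) := qCommGroup hle
  have hQp : ∀ q : G ⧸ Subgroup.center G, q ^ p = 1 := by
    intro q
    obtain ⟨x, rfl⟩ := QuotientGroup.mk_surjective q
    rw [← QuotientGroup.mk_pow]
    exact (QuotientGroup.eq_one_iff _).mpr (hcentral_pow x)
  haveI : Module (ZMod p) (Additive (G ⧸ Subgroup.center G)) := by
    refine AddCommGroup.zmodModule ?_
    intro x
    have h := hQp x.toMul
    have h2 := congrArg Additive.ofMul h
    rw [ofMul_pow] at h2
    exact h2
  -- the commutator pairing on the quotient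
  set F2 : (G ⧸ Subgroup.center G) → (G ⧸ Subgroup.center G) → ZMod p :=
    fun q r => f q.out r.out with hF2_def
  have hF2 : ∀ x y : G, F2 (x : G ⧸ Subgroup.center G) (y : G ⧸ Subgroup.center G) = f x y := by
    intro x y
    have h1 : ((((x : G ⧸ Subgroup.center G)).out : G) : G ⧸ Subgroup.center G)
        = (x : G ⧸ Subgroup.center G) := Quotient.out_eq _
    have h2 : ((((y : G ⧸ Subgroup.center G)).out : G) : G ⧸ Subgroup.center G)
        = (y : G ⧸ Subgroup.center G) := Quotient.out_eq _
    show f (Quotient.out ((x : G ⧸ Subgroup.center G))) (Quotient.out ((y : G ⧸ Subgroup.center G))) = f x y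
    rw [hf_inv_left _ _ _ h1, hf_inv_right _ _ _ h2]
  have hF2_add_l : ∀ q q' r, F2 (q * q') r = F2 q r + F2 q' r := by
    intro q q' r
    obtain ⟨x, rfl⟩ := QuotientGroup.mk_surjective q
    obtain ⟨x', rfl⟩ := QuotientGroup.mk_surjective q'
    obtain ⟨y, rfl⟩ := QuotientGroup.mk_surjective r
    rw [← QuotientGroup.mk_mul, hF2, hF2, hF2, hf_left]
  have hF2_add_r : ∀ q r r', F2 q (r * r') = F2 q r + F2 q r' := by
    intro q r r'
    obtain ⟨x, rfl⟩ := QuotientGroup.mk_surjective q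
    obtain ⟨y, rfl⟩ := QuotientGroup.mk_surjective r
    obtain ⟨y', rfl⟩ := QuotientGroup.mk_surjective r'
    rw [← QuotientGroup.mk_mul, hF2, hF2, hF2, hf_right]
  have hF2_zero_l : ∀ r, F2 1 r = 0 := by
    intro r
    obtain ⟨y, rfl⟩ := QuotientGroup.mk_surjective r
    have : ((1 : G) : G ⧸ Subgroup.center G) = 1 := QuotientGroup.mk_one (Subgroup.center G)
    rw [← this, hF2]
    rw [hf_iff]
    group
  have hF2_zero_r : ∀ q, F2 q 1 = 0 := by
    intro q
    obtain ⟨x, rfl⟩ := QuotientGroup.mk_surjective q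
    have : ((1 : G) : G ⧸ Subgroup.center G) = 1 := QuotientGroup.mk_one (Subgroup.center G)
    rw [← this, hF2]
    rw [hf_iff]
    group
  have hF2_diag : ∀ q, F2 q q = 0 := by
    intro q
    obtain ⟨x, rfl⟩ := QuotientGroup.mk_surjective q
    rw [hF2, hf_iff]
    group
  -- bundle as a bilinear map
  set cInner : Additive (G ⧸ Subgroup.center G) → (Additive (G ⧸ Subgroup.center G) →+ ZMod p) :=
    fun a =>
      { toFun := fun b => F2 a.toMul b.toMul
        map_zero' := hF2_zero_r _
        map_add' := fun b b' => hF2_add_r _ _ _ } with hcI_def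
  set cOuter : Additive (G ⧸ Subgroup.center G) →+
      (Additive (G ⧸ Subgroup.center G) →ₗ[ZMod p] ZMod p) :=
    { toFun := fun a => (cInner a).toZModLinearMap p
      map_zero' := by
        apply LinearMap.ext
        intro b
        exact hF2_zero_l b.toMul
      map_add' := fun a a' => by
        apply LinearMap.ext
        intro b
        exact hF2_add_l _ _ _ } with hcO_def
  set cL : Additive (G ⧸ Subgroup.center G) →ₗ[ZMod p]
      (Additive (G ⧸ Subgroup.center G) →ₗ[ZMod p] ZMod p) :=
    cOuter.toZModLinearMap p with hcL_def
  have hcL : ∀ (m m' : Additive (G ⧸ Subgroup.center G)), cL m m' = F2 m.toMul m'.toMul :=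
    fun m m' => rfl
  -- basis and transport to a standard space
  letI : Module.Finite (ZMod p) (Additive (G ⧸ Subgroup.center G)) := Module.Finite.of_finite
  set n := Module.finrank (ZMod p) (Additive (G ⧸ Subgroup.center G)) with hn_def
  set bas := Module.finBasis (ZMod p) (Additive (G ⧸ Subgroup.center G)) with hbas_def
  set eqv : Additive (G ⧸ Subgroup.center G) ≃ₗ[ZMod p] (Fin n → ZMod p) :=
    bas.equivFun with heqv_def
  set ω : (Fin n → ZMod p) →ₗ[ZMod p] (Fin n → ZMod p) →ₗ[ZMod p] ZMod p :=
    (cL.comp (eqv.symm.toLinearMap)).compl₂ (eqv.symm.toLinearMap) with hω_def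
  have hω : ∀ a b, ω a b = F2 (eqv.symm a).toMul (eqv.symm b).toMul := fun a b => rfl
  set e0 : (G ⧸ Subgroup.center G) ≃* Multiplicative (Additive (G ⧸ Subgroup.center G)) :=
    { toFun := fun q => Multiplicative.ofAdd (Additive.ofMul q)
      invFun := fun w => (w.toAdd).toMul
      left_inv := fun _ => rfl
      right_inv := fun _ => rfl
      map_mul' := fun _ _ => rfl } with he0_def
  set e : (G ⧸ Subgroup.center G) ≃* Multiplicative (Fin n → ZMod p) :=
    e0.trans (AddEquiv.toMultiplicative eqv.toAddEquiv) with he_def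
  have he : ∀ q : G ⧸ Subgroup.center G, (e q).toAdd = eqv (Additive.ofMul q) :=
    fun q => rfl
  refine ⟨n, ω, e, ψ, ?_, ?_⟩
  · intro a
    rw [hω]
    exact hF2_diag _
  · intro x y
    rw [he, he, hω, LinearEquiv.symm_apply_apply, LinearEquiv.symm_apply_apply]
    exact (hF2 x y).symm

theorem stmt_9 {G : Type*} [Group G] [Finite G] (p : ℕ) [Fact p.Prime]
    (hcard : Nat.card (commutator G) = p)
    (hle : commutator G ≤ Subgroup.center G) :
    ∃ (H : Type) (_ : Group H) (_ : Finite H),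
      IsPGroup p H ∧ Subgroup.center H = commutator H ∧
        Nat.card (Subgroup.center H) = p ∧ Nonempty (Isoclinism G H) := by
  obtain ⟨n, ω, e, ψ, halt, hcompat⟩ := exists_data p hcard hle
  exact exists_H p n ω halt e ψ hcompat
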